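/- Let λ : ℕ → ℝ be a bounded sequence, L > 0, I a countable index set, and g : I → ℓ²(ℕ, ℂ). If there exists C > 0 such that for every f ∈ ℓ²(ℕ, ℂ), ∑_{i∈I} ∫₀ᴸ |∑_{n=0}^∞ conj(f(n))·(λ(n))^t·g_i(n)|² dt ≥ C‖f‖², then the index set I is infinite. In particular, a semi-continuous frame {D^t g_i : i ∈ I, t ∈ [0, L]} for ℓ²(ℕ, ℂ) requires infinitely many generators. -/

import Mathlib

/-- If the semi-continuous system `{D^t gᵢ : i ∈ I, t ∈ [0,L]}` generated by a bounded
diagonal operator `D` (with real diagonal `lam`) on `ℓ²(ℕ, ℂ)` satisfies a lower frame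
bound, then the index set `I` is infinite. -/
theorem diagonal_lower_frame_bound_implies_infinite_generators
    (lam : ℕ → ℝ) (hlam : ∃ M : ℝ, ∀ n : ℕ, |lam n| ≤ M)
    (L : ℝ) (hL : 0 < L)
    {I : Type*} [Countable I] (g : I → lp (fun _ : ℕ => ℂ) 2)
    (C : ℝ) (hC : 0 < C)
    (hlow : ∀ f : lp (fun _ : ℕ => ℂ) 2,
      C * ‖f‖ ^ 2 ≤ ∑' i : I, ∫ t in (0 : ℝ)..L,
        ‖∑' n : ℕ, (starRingEnd ℂ) (f n) * ((lam n : ℂ) ^ (t : ℂ)) * g i n‖ ^ 2) :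
    Infinite I := by
  by_contra hinf
  rw [not_infinite_iff_finite] at hinf
  haveI := Fintype.ofFinite I
  obtain ⟨M, hM⟩ := hlam
  set M' : ℝ := max M 1 with hM'def
  have hM'1 : (1:ℝ) ≤ M' := le_max_right _ _
  set B : ℝ := (M' ^ L) ^ 2 with hBdef
  have hB0 : 0 ≤ B := sq_nonneg _
  -- key pointwise bound
  have key : ∀ n : ℕ, C ≤ L * B * ∑ i : I, ‖g i n‖ ^ 2 := by
    intro n
    have hf := hlow (lp.single (E := fun _ : ℕ => ℂ) 2 n (1:ℂ))
    have hnorm1 : ‖lp.single (E := fun _ : ℕ => ℂ) 2 n (1:ℂ)‖ = 1 := by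
      have := lp.norm_single (E := fun _ : ℕ => ℂ) (p := 2) (by norm_num) n (1:ℂ)
      simpa using this
    rw [hnorm1] at hf
    simp only [one_pow, mul_one] at hf
    -- simplify the tsum in hf
    have htsum : ∀ (i : I) (t : ℝ),
        (∑' m : ℕ, (starRingEnd ℂ) ((lp.single (E := fun _ : ℕ => ℂ) 2 n (1:ℂ)) m) * ((lam m : ℂ) ^ (t : ℂ)) * g i m)
          = ((lam n : ℂ) ^ (t : ℂ)) * g i n := by
      intro i t
      rw [tsum_eq_single n]
      · rw [lp.single_apply_self]; simp
      · intro m hm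
        rw [lp.single_apply_ne 2 n _ hm]; simp
    -- bound each integral
    have hint : ∀ i : I,
        (∫ t in (0:ℝ)..L, ‖∑' m : ℕ, (starRingEnd ℂ) ((lp.single (E := fun _ : ℕ => ℂ) 2 n (1:ℂ)) m) * ((lam m : ℂ) ^ (t : ℂ)) * g i m‖ ^ 2)
          ≤ L * (B * ‖g i n‖ ^ 2) := by
      intro i
      have hbound : ∀ t ∈ Set.Icc (0:ℝ) L,
          ‖∑' m : ℕ, (starRingEnd ℂ) ((lp.single (E := fun _ : ℕ => ℂ) 2 n (1:ℂ)) m) * ((lam m : ℂ) ^ (t : ℂ)) * g i m‖ ^ 2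
            ≤ B * ‖g i n‖ ^ 2 := by
        intro t ht
        rw [htsum i t, norm_mul, mul_pow]
        have h1 : ‖((lam n : ℂ) ^ (t : ℂ))‖ ≤ M' ^ L := by
          have := Complex.norm_cpow_le (lam n : ℂ) (t : ℂ)
          simp only [Complex.ofReal_im, Complex.ofReal_re, mul_zero, Real.exp_zero, div_one] at this
          refine le_trans this ?_
          have habs : ‖(lam n : ℂ)‖ = |lam n| := by simp
          rw [habs]
          calc |lam n| ^ t ≤ M' ^ t := by
                apply Real.rpow_le_rpow (abs_nonneg _) ((hM n).trans (le_max_left _ _)) ht.1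
            _ ≤ M' ^ L := Real.rpow_le_rpow_of_exponent_le hM'1 ht.2
        calc ‖((lam n : ℂ) ^ (t : ℂ))‖ ^ 2 * ‖g i n‖ ^ 2
            ≤ (M' ^ L) ^ 2 * ‖g i n‖ ^ 2 := by
              gcongr
          _ = B * ‖g i n‖ ^ 2 := rfl
      by_cases hI : IntervalIntegrable
          (fun t => ‖∑' m : ℕ, (starRingEnd ℂ) ((lp.single (E := fun _ : ℕ => ℂ) 2 n (1:ℂ)) m) * ((lam m : ℂ) ^ (t : ℂ)) * g i m‖ ^ 2)
          MeasureTheory.volume 0 L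
      · have := intervalIntegral.integral_mono_on hL.le hI intervalIntegrable_const hbound
        rwa [intervalIntegral.integral_const, sub_zero, smul_eq_mul] at this
      · rw [intervalIntegral.integral_undef hI]
        positivity
    have hsum : (∑' i : I, ∫ t in (0:ℝ)..L,
        ‖∑' m : ℕ, (starRingEnd ℂ) ((lp.single (E := fun _ : ℕ => ℂ) 2 n (1:ℂ)) m) * ((lam m : ℂ) ^ (t : ℂ)) * g i m‖ ^ 2)
        ≤ ∑ i : I, L * (B * ‖g i n‖ ^ 2) := by
      rw [tsum_fintype]
      exact Finset.sum_le_sum fun i _ => hint i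
    calc C ≤ _ := hf
      _ ≤ ∑ i : I, L * (B * ‖g i n‖ ^ 2) := hsum
      _ = L * B * ∑ i : I, ‖g i n‖ ^ 2 := by
          rw [Finset.mul_sum]; ring_nf
  -- now derive contradiction
  set S : ℝ := ∑ i : I, ‖g i‖ ^ 2 with hSdef
  obtain ⟨N, hN⟩ := exists_nat_gt (L * B * S / C)
  have hNC : L * B * S < N * C := by
    rwa [div_lt_iff₀ hC] at hN
  have hsum2 : (N : ℝ) * C ≤ L * B * S := by
    calc (N : ℝ) * C = ∑ _n ∈ Finset.range N, C := by
          rw [Finset.sum_const, Finset.card_range, nsmul_eq_mul]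
      _ ≤ ∑ n ∈ Finset.range N, L * B * ∑ i : I, ‖g i n‖ ^ 2 :=
          Finset.sum_le_sum fun n _ => key n
      _ = L * B * ∑ i : I, ∑ n ∈ Finset.range N, ‖g i n‖ ^ 2 := by
          rw [← Finset.mul_sum, Finset.sum_comm]
      _ ≤ L * B * S := by
          have hLB : 0 ≤ L * B := mul_nonneg hL.le hB0
          apply mul_le_mul_of_nonneg_left _ hLB
          apply Finset.sum_le_sum
          intro i _
          have h2 : (0:ℝ) < (2:ENNReal).toReal := by norm_num
          have := lp.sum_rpow_le_norm_rpow h2 (g i) (Finset.range N)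
          have htr : ((2:ENNReal)).toReal = (2:ℝ) := by norm_num
          rw [htr] at this
          calc ∑ n ∈ Finset.range N, ‖g i n‖ ^ 2
              = ∑ n ∈ Finset.range N, ‖g i n‖ ^ (2:ℝ) := by
                simp [Real.rpow_natCast]
            _ ≤ ‖g i‖ ^ (2:ℝ) := this
            _ = ‖g i‖ ^ 2 := by simp [Real.rpow_natCast]
  linarith
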